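/- Let n ≥ 2, let S ⊆ Z^n be an integrally convex set admitting a dec-min element, and Φ_rap(x) = Σ φ(x_i) a rapidly increasing symmetric separable convex function (φ positive, discrete convex, φ(k+1) ≥ n·φ(k)). Then there exists p* ∈ R^n such that decmin(S) = argmin_{x∈S} ⟨p*, x⟩ ∩ argmin(Φ_rap[−p*]), where Φ_rap[−p*](x) = Φ_rap(x) − ⟨p*, x⟩ and the second argmin is over all of Z^n. -/

import Mathlib

open Finset

/-- Descending rearrangement of a tuple. -/
noncomputable def sortDesc {n : ℕ} {α : Type*} [LinearOrder α] (x : Fin n → α) : Fin n → α :=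
  x ∘ (Tuple.sort (fun i => OrderDual.toDual (x i)))

/-- `x <_dec y` : strict lexicographic comparison of descending rearrangements. -/
noncomputable def decLT {n : ℕ} {α : Type*} [LinearOrder α] (x y : Fin n → α) : Prop :=
  ∃ i : Fin n, (∀ j : Fin n, j < i → sortDesc x j = sortDesc y j) ∧ sortDesc x i < sortDesc y i

/-- `x ≤_dec y` : lexicographic comparison of descending rearrangements. -/
noncomputable def decLE {n : ℕ} {α : Type*} [LinearOrder α] (x y : Fin n → α) : Prop :=
  sortDesc x = sortDesc y ∨ decLT x y

/-- `x` is a decreasingly minimal (dec-min) element of `S`. -/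
noncomputable def DecMin {n : ℕ} (S : Set (Fin n → ℤ)) (x : Fin n → ℤ) : Prop :=
  x ∈ S ∧ ∀ y ∈ S, decLE x y

/-- Embedding of integer vectors into real vectors. -/
def castVec {n : ℕ} (z : Fin n → ℤ) : Fin n → ℝ := fun i => (z i : ℝ)

/-- `S ⊆ ℤⁿ` is an integrally convex set: every point of `conv S` lies in the
convex hull of the points of `S` in its integral neighborhood. -/
def IntConvexSet {n : ℕ} (S : Set (Fin n → ℤ)) : Prop :=
  S.Nonempty ∧ ∀ x : Fin n → ℝ,
    x ∈ convexHull ℝ (castVec '' S) →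
    x ∈ convexHull ℝ (castVec '' {z ∈ S | ∀ i, |x i - (z i : ℝ)| < 1})

section aux

variable {n : ℕ}

lemma sum_sortDesc (φ : ℤ → ℝ) (x : Fin n → ℤ) :
    ∑ i, φ (sortDesc x i) = ∑ i, φ (x i) := by
  simp only [sortDesc, Function.comp]
  exact Equiv.sum_comp (Tuple.sort (fun i => OrderDual.toDual (x i))) (fun i => φ (x i))

lemma sortDesc_anti (x : Fin n → ℤ) {j k : Fin n} (hjk : j ≤ k) :
    sortDesc x k ≤ sortDesc x j := by
  have h := Tuple.monotone_sort (fun i => OrderDual.toDual (x i)) hjk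
  simpa [sortDesc] using h

lemma int_step_mono {ψ : ℤ → ℝ} (h : ∀ k, ψ k ≤ ψ (k + 1)) {k l : ℤ} (hkl : k ≤ l) :
    ψ k ≤ ψ l := by
  exact Int.le_induction (motive := fun l _ => ψ k ≤ ψ l) le_rfl (fun m _ ih => ih.trans (h m)) l hkl

lemma decLE_total (x y : Fin n → ℤ) : decLE x y ∨ decLT y x := by
  by_cases h : sortDesc x = sortDesc y
  · exact Or.inl (Or.inl h)
  · have hne : ∃ i, sortDesc x i ≠ sortDesc y i := Function.ne_iff.mp h
    obtain ⟨i₀, hi₀⟩ := hne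
    obtain ⟨i, hiT, hmin⟩ := Finset.exists_min_image
      (univ.filter fun i => sortDesc x i ≠ sortDesc y i) id ⟨i₀, by simpa using hi₀⟩
    have hi : sortDesc x i ≠ sortDesc y i := (mem_filter.mp hiT).2
    have hpre : ∀ j : Fin n, j < i → sortDesc x j = sortDesc y j := by
      intro j hj
      by_contra hc
      have := hmin j (by simpa using hc)
      exact absurd hj (not_lt.mpr this)
    rcases lt_or_gt_of_ne hi with hlt | hgt
    · exact Or.inl (Or.inr ⟨i, hpre, hlt⟩)
    · exact Or.inr ⟨i, fun j hj => (hpre j hj).symm, hgt⟩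

lemma decLT_sum_lt (hn : 2 ≤ n) (φ : ℤ → ℝ)
    (hpos : ∀ k : ℤ, 0 < φ k) (hmono : ∀ {k l : ℤ}, k ≤ l → φ k ≤ φ l)
    (hrap : ∀ k : ℤ, (n : ℝ) * φ k ≤ φ (k + 1)) {x y : Fin n → ℤ}
    (h : decLT x y) : ∑ i, φ (x i) < ∑ i, φ (y i) := by
  obtain ⟨i, hpre, hlt⟩ := h
  rw [← sum_sortDesc φ x, ← sum_sortDesc φ y]
  set a := sortDesc x with ha
  set b := sortDesc y with hb
  have hsplit : ∀ c : Fin n → ℤ, ∑ j, φ (c j) =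
      (∑ j ∈ univ.filter fun j => j < i, φ (c j)) +
      ∑ j ∈ univ.filter fun j => ¬ j < i, φ (c j) :=
    fun c => (Finset.sum_filter_add_sum_filter_not _ _ _).symm
  rw [hsplit a, hsplit b]
  have hpres : (∑ j ∈ univ.filter fun j => j < i, φ (a j)) =
      ∑ j ∈ univ.filter fun j => j < i, φ (b j) :=
    Finset.sum_congr rfl fun j hj => by rw [hpre j (mem_filter.mp hj).2]
  rw [hpres]
  have hsuffix : (∑ j ∈ univ.filter fun j => ¬ j < i, φ (a j)) <
      ∑ j ∈ univ.filter fun j => ¬ j < i, φ (b j) := by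
    have hFins : (univ.filter fun j => ¬ j < i) = insert i (univ.filter fun j => i < j) := by
      ext j
      simp only [mem_filter, mem_univ, true_and, mem_insert, not_lt]
      constructor
      · intro hij
        rcases eq_or_lt_of_le hij with h' | h'
        · exact Or.inl h'.symm
        · exact Or.inr h'
      · rintro (rfl | h')
        · exact le_rfl
        · exact h'.le
    have hnotmem : i ∉ univ.filter fun j => i < j := by simp
    have hstrict : φ (a i) + 1 * 0 < φ (b i) := by
      have h1 : φ (a i) < (n : ℝ) * φ (a i) := by
        have h2 : (2 : ℝ) ≤ (n : ℝ) := by exact_mod_cast hn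
        nlinarith [hpos (a i)]
      have h3 : φ (a i + 1) ≤ φ (b i) := hmono (Int.add_one_le_iff.mpr hlt)
      have := hrap (a i)
      simp only [one_mul, mul_zero, add_zero]
      linarith
    rcases (univ.filter fun j => i < j).eq_empty_or_nonempty with hemp | hne
    · rw [hFins, hemp, Finset.sum_insert (by simp), Finset.sum_insert (by simp),
        Finset.sum_empty]
      simpa using hstrict
    · have hbound : (∑ j ∈ univ.filter fun j => ¬ j < i, φ (a j)) ≤ φ (b i) := by
        have hcard : (∑ j ∈ univ.filter fun j => ¬ j < i, φ (a j)) ≤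
            (univ.filter fun j => ¬ j < i).card • φ (a i) := by
          refine Finset.sum_le_card_nsmul _ _ _ fun j hj => ?_
          have hij : i ≤ j := not_lt.mp (mem_filter.mp hj).2
          exact hmono (sortDesc_anti x hij)
        have hcard2 : ((univ.filter fun j => ¬ j < i).card : ℝ) ≤ (n : ℝ) := by
          have := Finset.card_filter_le (univ : Finset (Fin n)) (fun j => ¬ j < i)
          have h2 : (univ : Finset (Fin n)).card = n := by simp
          exact_mod_cast h2 ▸ this
        have h3 : φ (a i + 1) ≤ φ (b i) := hmono (Int.add_one_le_iff.mpr hlt)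
        have h4 := hrap (a i)
        have h5 : ((univ.filter fun j => ¬ j < i).card : ℝ) * φ (a i) ≤ (n : ℝ) * φ (a i) :=
          mul_le_mul_of_nonneg_right hcard2 (hpos _).le
        rw [nsmul_eq_mul] at hcard
        linarith
      have hpossum : 0 < ∑ j ∈ univ.filter fun j => i < j, φ (b j) :=
        Finset.sum_pos (fun j _ => hpos _) hne
      have hbsum : (∑ j ∈ univ.filter fun j => ¬ j < i, φ (b j)) =
          φ (b i) + ∑ j ∈ univ.filter fun j => i < j, φ (b j) := by
        rw [hFins, Finset.sum_insert hnotmem]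
      rw [hbsum]
      linarith
  linarith

lemma decLE_sum_le (hn : 2 ≤ n) (φ : ℤ → ℝ)
    (hpos : ∀ k : ℤ, 0 < φ k) (hmono : ∀ {k l : ℤ}, k ≤ l → φ k ≤ φ l)
    (hrap : ∀ k : ℤ, (n : ℝ) * φ k ≤ φ (k + 1)) {x y : Fin n → ℤ}
    (h : decLE x y) : ∑ i, φ (x i) ≤ ∑ i, φ (y i) := by
  rcases h with h | h
  · rw [← sum_sortDesc φ x, ← sum_sortDesc φ y, h]
  · exact (decLT_sum_lt hn φ hpos hmono hrap h).le

end aux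



noncomputable def phib (φ : ℤ → ℝ) (x : ℝ) : ℝ :=
  φ ⌊x⌋ + (x - ⌊x⌋) * (φ (⌊x⌋ + 1) - φ ⌊x⌋)

lemma phib_int (φ : ℤ → ℝ) (k : ℤ) : phib φ (k : ℝ) = φ k := by
  simp [phib]

lemma tangent_int (φ : ℤ → ℝ)
    (hslope : ∀ {k l : ℤ}, k ≤ l → φ (k + 1) - φ k ≤ φ (l + 1) - φ l) (m j : ℤ) :
    φ m + ((j : ℝ) - (m : ℝ)) * (φ (m + 1) - φ m) ≤ φ j := by
  rcases le_total m j with h | h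
  · refine Int.le_induction (motive := fun j _ => φ m + ((j : ℝ) - (m : ℝ)) * (φ (m + 1) - φ m) ≤ φ j)
      (by simp) ?_ j h
    intro l hl ih
    have h2 : φ (m + 1) - φ m ≤ φ (l + 1) - φ l := hslope hl
    have expand : φ m + ((↑(l + 1) : ℝ) - (m : ℝ)) * (φ (m + 1) - φ m)
        = (φ m + ((l : ℝ) - (m : ℝ)) * (φ (m + 1) - φ m)) + (φ (m + 1) - φ m) := by
      push_cast; ring
    rw [expand]; linarith
  · refine Int.le_induction_down (motive := fun j _ => φ m + ((j : ℝ) - (m : ℝ)) * (φ (m + 1) - φ m) ≤ φ j)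
      (by simp) ?_ j h
    intro l hl ih
    have h2 : φ (l - 1 + 1) - φ (l - 1) ≤ φ (m + 1) - φ m := hslope (by omega)
    have h3 : l - 1 + 1 = l := by ring
    rw [h3] at h2
    have expand : φ m + ((↑(l - 1) : ℝ) - (m : ℝ)) * (φ (m + 1) - φ m)
        = (φ m + ((l : ℝ) - (m : ℝ)) * (φ (m + 1) - φ m)) - (φ (m + 1) - φ m) := by
      push_cast; ring
    rw [expand]; linarith

lemma tangent_real (φ : ℤ → ℝ)
    (hslope : ∀ {k l : ℤ}, k ≤ l → φ (k + 1) - φ k ≤ φ (l + 1) - φ l) (m : ℤ) (x : ℝ) :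
    φ m + (x - (m : ℝ)) * (φ (m + 1) - φ m) ≤ phib φ x := by
  set k := ⌊x⌋ with hk
  have h0 : (k : ℝ) ≤ x := Int.floor_le x
  have h1 : x < (k : ℝ) + 1 := Int.lt_floor_add_one x
  have t1 := tangent_int φ hslope m k
  have t2 := tangent_int φ hslope m (k + 1)
  push_cast at t2
  have ha : 0 ≤ x - (k : ℝ) := by linarith
  have hb : 0 ≤ 1 - (x - (k : ℝ)) := by linarith
  have e1 : φ m + (x - (m : ℝ)) * (φ (m + 1) - φ m)
      = (1 - (x - (k : ℝ))) * (φ m + ((k : ℝ) - (m : ℝ)) * (φ (m + 1) - φ m))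
        + (x - (k : ℝ)) * (φ m + (((k : ℝ) + 1) - (m : ℝ)) * (φ (m + 1) - φ m)) := by ring
  have e2 : phib φ x = (1 - (x - (k : ℝ))) * φ k + (x - (k : ℝ)) * φ (k + 1) := by
    simp only [phib, ← hk]; ring
  rw [e1, e2]
  have u1 := mul_le_mul_of_nonneg_left t1 hb
  have u2 := mul_le_mul_of_nonneg_left t2 ha
  linarith

lemma phib_convexOn (φ : ℤ → ℝ)
    (hslope : ∀ {k l : ℤ}, k ≤ l → φ (k + 1) - φ k ≤ φ (l + 1) - φ l) :
    ConvexOn ℝ Set.univ (phib φ) := by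
  refine ⟨convex_univ, fun x _ y _ a b ha hb hab => ?_⟩
  simp only [smul_eq_mul]
  have hba : b = 1 - a := by linarith
  set m := ⌊a * x + b * y⌋ with hm
  have t1 := tangent_real φ hslope m x
  have t2 := tangent_real φ hslope m y
  have key : phib φ (a * x + b * y)
      = a * (φ m + (x - (m : ℝ)) * (φ (m + 1) - φ m))
        + b * (φ m + (y - (m : ℝ)) * (φ (m + 1) - φ m)) := by
    simp only [phib, ← hm]
    rw [hba]; ring
  rw [key]
  have u1 := mul_le_mul_of_nonneg_left t1 ha
  have u2 := mul_le_mul_of_nonneg_left t2 hb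
  linarith

lemma phib_continuous (φ : ℤ → ℝ)
    (hslope : ∀ {k l : ℤ}, k ≤ l → φ (k + 1) - φ k ≤ φ (l + 1) - φ l) :
    Continuous (phib φ) := by
  have h := (phib_convexOn φ hslope).continuousOn isOpen_univ
  rwa [← continuousOn_univ]





lemma hull_min {n : ℕ} (φ : ℤ → ℝ) (S : Set (Fin n → ℤ)) (hS : IntConvexSet S)
    (c : ℝ) (hmin : ∀ z ∈ S, c ≤ ∑ i, φ (z i)) :
    ∀ x ∈ convexHull ℝ (castVec '' S), c ≤ ∑ i, phib φ (x i) := by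
  intro x hx
  have hx2 := hS.2 x hx
  set m : Fin n → ℤ := fun i => ⌊x i⌋ with hm
  set A : (Fin n → ℝ) → ℝ :=
    fun v => ∑ i, (φ (m i) + (v i - (m i : ℝ)) * (φ (m i + 1) - φ (m i))) with hA
  have hAaff : ∀ (v u : Fin n → ℝ) (a b : ℝ), a + b = 1 →
      A (a • v + b • u) = a * A v + b * A u := by
    intro v u a b hab
    have hba : b = 1 - a := by linarith
    simp only [hA, Finset.mul_sum, ← Finset.sum_add_distrib]
    refine Finset.sum_congr rfl fun i _ => ?_
    simp only [Pi.add_apply, Pi.smul_apply, smul_eq_mul]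
    rw [hba]; ring
  have hK : Convex ℝ {v : Fin n → ℝ | c ≤ A v} := by
    intro v hv u hu a b ha hb hab
    simp only [Set.mem_setOf_eq] at hv hu ⊢
    rw [hAaff v u a b hab]
    have hc : a * c + b * c = c := by
      have := congrArg (· * c) hab
      simpa [add_mul] using this
    nlinarith [mul_le_mul_of_nonneg_left hv ha, mul_le_mul_of_nonneg_left hu hb]
  have hsub : castVec '' {z ∈ S | ∀ i, |x i - (z i : ℝ)| < 1} ⊆ {v | c ≤ A v} := by
    rintro _ ⟨z, ⟨hzS, hznear⟩, rfl⟩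
    have hzval : A (castVec z) = ∑ i, φ (z i) := by
      refine Finset.sum_congr rfl fun i _ => ?_
      have h1 := abs_lt.mp (hznear i)
      have hfl : (m i : ℝ) ≤ x i := Int.floor_le (x i)
      have hfu : x i < (m i : ℝ) + 1 := Int.lt_floor_add_one (x i)
      have hlow : m i ≤ z i := by
        by_contra hcon; push_neg at hcon
        have : (z i : ℝ) + 1 ≤ (m i : ℝ) := by exact_mod_cast hcon
        linarith [h1.2]
      have hhigh : z i ≤ m i + 1 := by
        by_contra hcon; push_neg at hcon
        have hcon2 : m i + 2 ≤ z i := by omega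
        have : (m i : ℝ) + 2 ≤ (z i : ℝ) := by exact_mod_cast hcon2
        linarith [h1.1]
      have hcase : z i = m i ∨ z i = m i + 1 := by omega
      rcases hcase with h | h <;> simp only [castVec] <;> rw [h] <;> push_cast <;> ring
    have : c ≤ A (castVec z) := hzval ▸ hmin z hzS
    exact this
  have hxK : c ≤ A x := convexHull_min hsub hK hx2
  have hAx : A x = ∑ i, phib φ (x i) := by
    refine Finset.sum_congr rfl fun i _ => ?_
    simp only [phib, hm]
  linarith



set_option maxHeartbeats 1000000 in
theorem decmin_fenchel_decomposition (n : ℕ) (hn : 2 ≤ n) (S : Set (Fin n → ℤ))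
    (hS : IntConvexSet S) (hdm : ∃ w, DecMin S w)
    (φ : ℤ → ℝ)
    (hpos : ∀ k : ℤ, 0 < φ k)
    (hconv : ∀ k : ℤ, 2 * φ k ≤ φ (k - 1) + φ (k + 1))
    (hrap : ∀ k : ℤ, (n : ℝ) * φ k ≤ φ (k + 1)) :
    ∃ p : Fin n → ℝ,
      {x | DecMin S x} =
        {x ∈ S | ∀ y ∈ S, ∑ i, p i * (x i : ℝ) ≤ ∑ i, p i * (y i : ℝ)} ∩
        {x : Fin n → ℤ | ∀ y : Fin n → ℤ,
          (∑ i, φ (x i)) - ∑ i, p i * (x i : ℝ) ≤ (∑ i, φ (y i)) - ∑ i, p i * (y i : ℝ)} := by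
  obtain ⟨w, hw⟩ := hdm
  have hn2 : (2 : ℝ) ≤ (n : ℝ) := by exact_mod_cast hn
  have hstep : ∀ k : ℤ, φ k < φ (k + 1) := fun k =>
    lt_of_lt_of_le (by nlinarith [hpos k]) (hrap k)
  have hmono : ∀ {k l : ℤ}, k ≤ l → φ k ≤ φ l := fun h =>
    int_step_mono (fun k => (hstep k).le) h
  have hslope : ∀ {k l : ℤ}, k ≤ l → φ (k + 1) - φ k ≤ φ (l + 1) - φ l := by
    intro k l h
    refine int_step_mono (ψ := fun k => φ (k + 1) - φ k) ?_ h
    intro k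
    have h2 := hconv (k + 1)
    rw [add_sub_cancel_right] at h2
    linarith
  have hwmin : ∀ z ∈ S, (∑ i, φ (w i)) ≤ ∑ i, φ (z i) := fun z hz =>
    decLE_sum_le hn φ hpos hmono hrap (hw.2 z hz)
  set Φw : ℝ := ∑ i, φ (w i) with hΦw
  set Φb : (Fin n → ℝ) → ℝ := fun v => ∑ i, phib φ (v i) with hΦb
  set C : Set (Fin n → ℝ) := convexHull ℝ (castVec '' S) with hC
  have hwC : castVec w ∈ C := subset_convexHull ℝ _ (Set.mem_image_of_mem _ hw.1)
  have hCmin : ∀ v ∈ C, Φw ≤ Φb v := by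
    intro v hv
    rw [hΦb]
    exact hull_min φ S hS Φw hwmin v hv
  have hΦbw : Φb (castVec w) = Φw := by
    rw [hΦb, hΦw]
    simp only [castVec, phib_int]
  have hΦbz : ∀ z : Fin n → ℤ, Φb (castVec z) = ∑ i, φ (z i) := fun z => by
    rw [hΦb]
    simp only [castVec, phib_int]
  have hΦbconv : ConvexOn ℝ Set.univ Φb := by
    refine ⟨convex_univ, fun v _ u _ a b ha hb hab => ?_⟩
    simp only [hΦb, smul_eq_mul, Finset.mul_sum, ← Finset.sum_add_distrib]
    refine Finset.sum_le_sum fun i _ => ?_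
    have h := (phib_convexOn φ hslope).2 (Set.mem_univ (v i)) (Set.mem_univ (u i)) ha hb hab
    simpa [Pi.add_apply, Pi.smul_apply, smul_eq_mul] using h
  have hΦbcont : Continuous Φb := by
    rw [hΦb]
    exact continuous_finset_sum _ fun i _ => (phib_continuous φ hslope).comp (continuous_apply i)
  have hAc : Convex ℝ {z : (Fin n → ℝ) × ℝ | z.1 ∈ (Set.univ : Set (Fin n → ℝ)) ∧ Φb z.1 < z.2} :=
    hΦbconv.convex_strict_epigraph
  have hAo : IsOpen {z : (Fin n → ℝ) × ℝ | z.1 ∈ (Set.univ : Set (Fin n → ℝ)) ∧ Φb z.1 < z.2} := by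
    have he : {z : (Fin n → ℝ) × ℝ | z.1 ∈ (Set.univ : Set (Fin n → ℝ)) ∧ Φb z.1 < z.2}
        = {z : (Fin n → ℝ) × ℝ | Φb z.1 < z.2} := by
      ext z; simp
    rw [he]
    exact isOpen_lt (hΦbcont.comp continuous_fst) continuous_snd
  have hBc : Convex ℝ (C ×ˢ Set.Iic Φw) := (convex_convexHull ℝ _).prod (convex_Iic _)
  have hdisj : Disjoint
      {z : (Fin n → ℝ) × ℝ | z.1 ∈ (Set.univ : Set (Fin n → ℝ)) ∧ Φb z.1 < z.2}
      (C ×ˢ Set.Iic Φw) := by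
    rw [Set.disjoint_left]
    rintro ⟨v, t⟩ ⟨-, hvt⟩ ⟨hvC, ht⟩
    simp only [Set.mem_Iic] at ht
    exact absurd hvt (not_lt.mpr (ht.trans (hCmin v hvC)))
  obtain ⟨f, u, hf₁, hf₂⟩ := geometric_hahn_banach_open hAc hAo hBc hdisj
  set q : (Fin n → ℝ) →ₗ[ℝ] ℝ := f.toLinearMap.comp (LinearMap.inl ℝ (Fin n → ℝ) ℝ) with hqdef
  set c : ℝ := f ((0 : Fin n → ℝ), (1 : ℝ)) with hcdef
  have hfsplit : ∀ (v : Fin n → ℝ) (t : ℝ), f (v, t) = q v + t * c := by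
    intro v t
    have h1 : ((v, t) : (Fin n → ℝ) × ℝ) = (v, 0) + t • ((0 : Fin n → ℝ), (1 : ℝ)) := by
      ext <;> simp
    rw [h1, map_add, map_smul, smul_eq_mul]
    rfl
  have hA' : ∀ (v : Fin n → ℝ) (t : ℝ), Φb v < t → q v + t * c < u := by
    intro v t h
    have h2 := hf₁ (v, t) ⟨Set.mem_univ _, h⟩
    rwa [hfsplit] at h2
  have hB' : ∀ v ∈ C, ∀ t ≤ Φw, u ≤ q v + t * c := by
    intro v hv t ht
    have h2 := hf₂ (v, t) (Set.mk_mem_prod hv ht)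
    rwa [hfsplit] at h2
  have hc : c < 0 := by
    rcases lt_trichotomy c 0 with h | h | h
    · exact h
    · exfalso
      have h1 := hA' (castVec w) (Φw + 1) (by rw [hΦbw]; linarith)
      have h2 := hB' (castVec w) hwC Φw le_rfl
      rw [h] at h1 h2
      simp only [mul_zero, add_zero] at h1 h2
      linarith
    · exfalso
      have h1 : Φb (castVec w) < max (Φw + 1) ((u - q (castVec w)) / c + 1) := by
        rw [hΦbw]
        exact lt_of_lt_of_le (lt_add_one _) (le_max_left _ _)
      have h2 := hA' (castVec w) _ h1
      have h3 : (u - q (castVec w)) / c + 1 ≤ max (Φw + 1) ((u - q (castVec w)) / c + 1) :=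
        le_max_right _ _
      have h4 : ((u - q (castVec w)) / c) * c = u - q (castVec w) :=
        div_mul_cancel₀ _ (ne_of_gt h)
      nlinarith [mul_le_mul_of_nonneg_right h3 h.le]
  have hcpos : (0 : ℝ) < -c := by linarith
  have hcne : c ≠ 0 := ne_of_lt hc
  have hkey1 : ∀ v : Fin n → ℝ, q v + Φb v * c ≤ u := by
    intro v
    by_contra hcon
    push_neg at hcon
    have hX : 0 < q v + Φb v * c - u := by linarith
    set δ : ℝ := (q v + Φb v * c - u) / (-2 * c) with hδ
    have hδpos : 0 < δ := div_pos hX (by linarith)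
    have h1 := hA' v (Φb v + δ) (by linarith)
    have h2 : δ * c = -(q v + Φb v * c - u) / 2 := by
      rw [hδ]
      field_simp
    nlinarith
  have huw : q (castVec w) + Φw * c = u := by
    have h1 := hkey1 (castVec w)
    rw [hΦbw] at h1
    exact le_antisymm h1 (hB' (castVec w) hwC Φw le_rfl)
  set p : Fin n → ℝ := fun i => q (fun j => if i = j then (1 : ℝ) else 0) / (-c) with hpdef
  have hpsum : ∀ v : Fin n → ℝ, (∑ i, p i * v i) = q v / (-c) := by
    intro v
    have h1 : q v = ∑ i, v i * q (fun j => if i = j then (1 : ℝ) else 0) := by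
      conv_lhs => rw [pi_eq_sum_univ v]
      rw [map_sum]
      refine Finset.sum_congr rfl fun i _ => ?_
      rw [map_smul, smul_eq_mul]
    rw [h1, Finset.sum_div]
    refine Finset.sum_congr rfl fun i _ => ?_
    simp only [hpdef]
    ring
  have hpsumZ : ∀ z : Fin n → ℤ, (∑ i, p i * (z i : ℝ)) = q (castVec z) / (-c) := by
    intro z
    have h1 := hpsum (castVec z)
    simpa [castVec] using h1
  have hsuppt : ∀ y ∈ S, (∑ i, p i * (w i : ℝ)) ≤ ∑ i, p i * (y i : ℝ) := by
    intro y hy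
    have h1 := hB' (castVec y) (subset_convexHull ℝ _ (Set.mem_image_of_mem _ hy)) Φw le_rfl
    have h2 : q (castVec w) ≤ q (castVec y) := by linarith [huw]
    rw [hpsumZ, hpsumZ]
    exact (div_le_div_iff_of_pos_right hcpos).mpr h2
  have hsubg : ∀ z : Fin n → ℤ,
      Φw - (∑ i, p i * (w i : ℝ)) ≤ (∑ i, φ (z i)) - ∑ i, p i * (z i : ℝ) := by
    intro z
    have h1 := hkey1 (castVec z)
    rw [hΦbz z] at h1
    rw [hpsumZ, hpsumZ]
    have h2 : (q (castVec z) - q (castVec w)) / (-c) ≤ (∑ i, φ (z i)) - Φw := by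
      rw [div_le_iff₀ hcpos]
      nlinarith [h1, huw]
    rw [sub_div] at h2
    linarith
  refine ⟨p, ?_⟩
  ext x
  simp only [Set.mem_setOf_eq, Set.mem_inter_iff, Set.mem_sep_iff]
  constructor
  · intro hx
    have hxw : (∑ i, φ (x i)) = Φw :=
      le_antisymm (decLE_sum_le hn φ hpos hmono hrap (hx.2 w hw.1)) (hwmin x hx.1)
    have e1 := hsuppt x hx.1
    have e2 := hsubg x
    refine ⟨⟨hx.1, fun y hy => ?_⟩, fun y => ?_⟩
    · linarith [hsuppt y hy]
    · linarith [hsubg y]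
  · rintro ⟨⟨hxS, hxlin⟩, hxsub⟩
    refine ⟨hxS, fun y hy => ?_⟩
    rcases decLE_total x y with h | h
    · exact h
    · exfalso
      have h1 := decLT_sum_lt hn φ hpos hmono hrap h
      have h2 := hxlin y hy
      have h3 := hxsub y
      linarith
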